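/- Let C be a nonempty weak* compact convex subset of a dual Banach space E and let T : C → C be weak*-continuous and nonexpansive. Then the set Fix T of fixed points of T is nonempty and there exists a nonexpansive retraction R : C → Fix T (i.e., R is nonexpansive, R(C) ⊆ Fix T, and Rx = x for all x ∈ Fix T). -/

import Mathlib

open Filter Topology

set_option maxHeartbeats 1000000 in
/-- If `T : C → C` is weak*-continuous and nonexpansive on a nonempty
weak* compact convex `C`, then `Fix T` is nonempty and there is a nonexpansive
retraction of `C` onto `Fix T`. -/
theorem stmt3 {E : Type*} [NormedAddCommGroup E] [NormedSpace ℝ E]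
    (C : Set (WeakDual ℝ E)) (hne : C.Nonempty) (hcomp : IsCompact C) (hconv : Convex ℝ C)
    (T : WeakDual ℝ E → WeakDual ℝ E) (hT : Set.MapsTo T C C)
    (hTc : ContinuousOn T C)
    (hTne : ∀ y ∈ C, ∀ z ∈ C,
      ‖WeakDual.toStrongDual (T y - T z)‖ ≤ ‖WeakDual.toStrongDual (y - z)‖) :
    {x | x ∈ C ∧ T x = x}.Nonempty ∧
    ∃ R : WeakDual ℝ E → WeakDual ℝ E,
      Set.MapsTo R C {x | x ∈ C ∧ T x = x} ∧
      (∀ y ∈ C, ∀ z ∈ C,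
        ‖WeakDual.toStrongDual (R y - R z)‖ ≤ ‖WeakDual.toStrongDual (y - z)‖) ∧
      (∀ x, x ∈ C ∧ T x = x → R x = x) := by
  classical
  -- Step 1: existence of approximate resolvents
  have key : ∀ x ∈ C, ∀ ε : ℝ, 0 < ε → ε < 1 →
      ∃ z, z ∈ C ∧ z = (1 - ε) • T z + ε • x := by
    intro x hx ε hε0 hε1
    set s : Set (StrongDual ℝ E) := StrongDual.toWeakDual ⁻¹' C with hs
    have hsclosed : IsClosed s :=
      hcomp.isClosed.preimage NormedSpace.Dual.toWeakDual_continuous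
    have hscomplete : IsComplete s := hsclosed.isComplete
    set f : StrongDual ℝ E → StrongDual ℝ E :=
      fun y => (1 - ε) • WeakDual.toStrongDual (T (StrongDual.toWeakDual y)) +
        ε • WeakDual.toStrongDual x with hf
    have hfweak : ∀ y : StrongDual ℝ E, StrongDual.toWeakDual (f y) =
        (1 - ε) • T (StrongDual.toWeakDual y) + ε • x := by
      intro y
      simp only [hf, map_add, map_smul, LinearEquiv.apply_symm_apply]
      rfl
    have hmaps : Set.MapsTo f s s := by
      intro y hy
      have hy' : StrongDual.toWeakDual y ∈ C := hy
      show StrongDual.toWeakDual (f y) ∈ C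
      rw [hfweak]
      exact hconv (hT hy') hx (by linarith) (le_of_lt hε0) (by ring)
    have hcontr : ContractingWith (1 - ε).toNNReal (hmaps.restrict f s s) := by
      constructor
      · rw [← NNReal.coe_lt_coe, Real.coe_toNNReal _ (by linarith : (0:ℝ) ≤ 1 - ε)]
        simpa using hε0
      · apply LipschitzWith.of_dist_le_mul
        intro a b
        rw [Subtype.dist_eq, Subtype.dist_eq, Set.MapsTo.val_restrict_apply,
          Set.MapsTo.val_restrict_apply, dist_eq_norm, dist_eq_norm,
          Real.coe_toNNReal _ (by linarith : (0:ℝ) ≤ 1 - ε)]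
        have : f a.val - f b.val = (1 - ε) • (WeakDual.toStrongDual
            (T (StrongDual.toWeakDual a.val) - T (StrongDual.toWeakDual b.val))) := by
          simp only [hf, map_sub]
          module
        rw [this, norm_smul, Real.norm_eq_abs, abs_of_nonneg (by linarith : (0:ℝ) ≤ 1 - ε)]
        have hbound := hTne (StrongDual.toWeakDual a.val)
          (a.2 : StrongDual.toWeakDual a.val ∈ C)
          (StrongDual.toWeakDual b.val)
          (b.2 : StrongDual.toWeakDual b.val ∈ C)
        have heq : WeakDual.toStrongDual
            (StrongDual.toWeakDual a.val - StrongDual.toWeakDual b.val)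
            = a.val - b.val := rfl
        rw [heq] at hbound
        exact mul_le_mul_of_nonneg_left hbound (by linarith)
    have hxs : WeakDual.toStrongDual x ∈ s := by
      show StrongDual.toWeakDual (WeakDual.toStrongDual x) ∈ C
      exact hx
    obtain ⟨y, hys, hyfix, -, -⟩ :=
      hcontr.exists_fixedPoint' hscomplete hmaps hxs (edist_ne_top _ _)
    refine ⟨StrongDual.toWeakDual y, hys, ?_⟩
    have := hfweak y
    rw [hyfix] at this
    exact this
  -- Step 2: nonexpansiveness between approximate resolvents
  have P1 : ∀ ε : ℝ, 0 < ε → ε < 1 → ∀ x y z w : WeakDual ℝ E, x ∈ C → y ∈ C → z ∈ C → w ∈ C →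
      z = (1 - ε) • T z + ε • x → w = (1 - ε) • T w + ε • y →
      ‖WeakDual.toStrongDual (z - w)‖ ≤ ‖WeakDual.toStrongDual (x - y)‖ := by
    intro ε hε0 hε1 x y z w hx hy hz hw hzeq hweq
    have hd : z - w = (1 - ε) • (T z - T w) + ε • (x - y) := by
      conv_lhs => rw [hzeq, hweq]
      module
    have hid : WeakDual.toStrongDual (z - w) =
        (1 - ε) • WeakDual.toStrongDual (T z - T w) + ε • WeakDual.toStrongDual (x - y) := by
      rw [hd]; rfl
    have h1 : ‖WeakDual.toStrongDual (z - w)‖ ≤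
        (1 - ε) * ‖WeakDual.toStrongDual (T z - T w)‖ +
        ε * ‖WeakDual.toStrongDual (x - y)‖ := by
      rw [hid]
      calc ‖(1 - ε) • WeakDual.toStrongDual (T z - T w) + ε • WeakDual.toStrongDual (x - y)‖
          ≤ ‖(1 - ε) • WeakDual.toStrongDual (T z - T w)‖ +
            ‖ε • WeakDual.toStrongDual (x - y)‖ := norm_add_le _ _
        _ = (1 - ε) * ‖WeakDual.toStrongDual (T z - T w)‖ +
            ε * ‖WeakDual.toStrongDual (x - y)‖ := by
            rw [norm_smul, norm_smul, Real.norm_eq_abs, Real.norm_eq_abs,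
              abs_of_nonneg (by linarith : (0:ℝ) ≤ 1 - ε), abs_of_nonneg hε0.le]
    have h2 := hTne z hz w hw
    nlinarith [h1, h2]
  -- Step 3: the approximate resolvent maps
  set epsn : ℕ → ℝ := fun n => ((n : ℝ) + 2)⁻¹ with hepsn
  have hepsn0 : ∀ n, 0 < epsn n := fun n => by positivity
  have hepsn1 : ∀ n, epsn n < 1 := by
    intro n
    rw [hepsn]
    rw [inv_lt_one_iff₀]
    right; push_cast; linarith [Nat.cast_nonneg (α := ℝ) n]
  have hepsnlim : Tendsto epsn atTop (𝓝 0) := by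
    apply Filter.Tendsto.inv_tendsto_atTop
    exact tendsto_atTop_add_const_right _ 2 tendsto_natCast_atTop_atTop
  set Z : ℕ → WeakDual ℝ E → WeakDual ℝ E := fun n x =>
    if h : x ∈ C then (key x h (epsn n) (hepsn0 n) (hepsn1 n)).choose else x with hZ
  have hZspec : ∀ n, ∀ x, ∀ h : x ∈ C, Z n x ∈ C ∧
      Z n x = (1 - epsn n) • T (Z n x) + epsn n • x := by
    intro n x h
    simp only [hZ, dif_pos h]
    exact (key x h (epsn n) (hepsn0 n) (hepsn1 n)).choose_spec
  -- fixed points are fixed by Z n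
  have hZfix : ∀ n, ∀ x, x ∈ C → T x = x → Z n x = x := by
    intro n x hx hTx
    have hxeq : x = (1 - epsn n) • T x + epsn n • x := by
      rw [hTx]; module
    have := P1 (epsn n) (hepsn0 n) (hepsn1 n) x x (Z n x) x hx hx
      (hZspec n x hx).1 hx (hZspec n x hx).2 hxeq
    rw [sub_self, map_zero, norm_zero] at this
    have h0 : WeakDual.toStrongDual (Z n x - x) = 0 := by
      rw [← norm_le_zero_iff]; exact this
    have : Z n x - x = 0 := by
      have := (LinearEquiv.map_eq_zero_iff WeakDual.toStrongDual).1 h0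
      exact this
    exact sub_eq_zero.1 this
  -- Step 4: ultrafilter limit
  set U : Ultrafilter ℕ := Ultrafilter.of atTop with hUdef
  have hU : (U : Filter ℕ) ≤ atTop := Ultrafilter.of_le _
  have limEx : ∀ x, x ∈ C → ∃ y ∈ C, Tendsto (fun n => Z n x) U (𝓝 y) := by
    intro x hx
    have hle : (U.map (fun n => Z n x) : Filter (WeakDual ℝ E)) ≤ 𝓟 C := by
      rw [le_principal_iff]
      exact Filter.mem_map.2 (Filter.univ_mem' (fun n => (hZspec n x hx).1))
    obtain ⟨a, haC, ha⟩ := hcomp.ultrafilter_le_nhds (U.map (fun n => Z n x)) hle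
    exact ⟨a, haC, ha⟩
  set R : WeakDual ℝ E → WeakDual ℝ E := fun x =>
    if h : x ∈ C then (limEx x h).choose else x with hR
  have hRspec : ∀ x, ∀ h : x ∈ C, R x ∈ C ∧ Tendsto (fun n => Z n x) U (𝓝 (R x)) := by
    intro x h
    simp only [hR, dif_pos h]
    exact ⟨(limEx x h).choose_spec.1, (limEx x h).choose_spec.2⟩
  -- Step 5: R x is a fixed point of T
  have hTR : ∀ x, x ∈ C → T (R x) = R x := by
    intro x hx
    obtain ⟨hRC, hRlim⟩ := hRspec x hx
    -- T (Z n x) tends to T (R x)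
    have h1 : Tendsto (fun n => T (Z n x)) U (𝓝 (T (R x))) := by
      have hwithin : Tendsto (fun n => Z n x) U (𝓝[C] (R x)) := by
        rw [nhdsWithin]
        exact tendsto_inf.2 ⟨hRlim,
          tendsto_principal.2 (Filter.Eventually.of_forall (fun n => (hZspec n x hx).1))⟩
      exact (hTc (R x) hRC).tendsto.comp hwithin
    -- Z n x - T (Z n x) tends to 0 along U
    have h2 : Tendsto (fun n => Z n x - T (Z n x)) U (𝓝 (0 : WeakDual ℝ E)) := by
      -- the vectors x - T (Z n x) lie in a compact set
      have hKcomp : IsCompact ((fun c => x - c) '' C) :=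
        hcomp.image (continuous_const.sub continuous_id)
      have hle : (U.map (fun n => x - T (Z n x)) : Filter (WeakDual ℝ E)) ≤
          𝓟 ((fun c => x - c) '' C) := by
        rw [le_principal_iff]
        exact Filter.mem_map.2 (Filter.univ_mem' (fun n =>
          ⟨T (Z n x), hT (hZspec n x hx).1, rfl⟩))
      obtain ⟨v, -, hv⟩ := hKcomp.ultrafilter_le_nhds (U.map (fun n => x - T (Z n x))) hle
      have hsm : Tendsto (fun n => epsn n • (x - T (Z n x))) U (𝓝 ((0:ℝ) • v)) :=
        Filter.Tendsto.smul (hepsnlim.mono_left hU) hv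
      rw [zero_smul] at hsm
      have hfun : (fun n => Z n x - T (Z n x)) = fun n => epsn n • (x - T (Z n x)) := by
        funext n
        have h := (hZspec n x hx).2
        set w := T (Z n x) with hw
        rw [h]
        module
      rw [hfun]
      exact hsm
    have h3 : Tendsto (fun n => T (Z n x)) U (𝓝 (R x)) := by
      have := hRlim.sub h2
      rw [sub_zero] at this
      have hfun : (fun n => Z n x - (Z n x - T (Z n x))) = fun n => T (Z n x) := by
        funext n; abel
      rwa [hfun] at this
    exact tendsto_nhds_unique h1 h3
  -- Step 6: R is nonexpansive on C
  have hRne : ∀ y ∈ C, ∀ z ∈ C,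
      ‖WeakDual.toStrongDual (R y - R z)‖ ≤ ‖WeakDual.toStrongDual (y - z)‖ := by
    intro y hy z hz
    set r : ℝ := ‖WeakDual.toStrongDual (y - z)‖ with hr
    have hmem : ∀ n, Z n y - Z n z ∈
        WeakDual.toStrongDual ⁻¹' Metric.closedBall 0 r := by
      intro n
      simp only [Set.mem_preimage, Metric.mem_closedBall, dist_zero_right]
      exact P1 (epsn n) (hepsn0 n) (hepsn1 n) y z (Z n y) (Z n z) hy hz
        (hZspec n y hy).1 (hZspec n z hz).1 (hZspec n y hy).2 (hZspec n z hz).2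
    have hlim : Tendsto (fun n => Z n y - Z n z) U (𝓝 (R y - R z)) :=
      (hRspec y hy).2.sub (hRspec z hz).2
    have hcl : R y - R z ∈ WeakDual.toStrongDual ⁻¹' Metric.closedBall 0 r :=
      (WeakDual.isClosed_closedBall 0 r).mem_of_tendsto hlim
        (Filter.Eventually.of_forall hmem)
    simpa only [Set.mem_preimage, Metric.mem_closedBall, dist_zero_right] using hcl
  -- Step 7: R fixes fixed points
  have hRfix : ∀ x, x ∈ C ∧ T x = x → R x = x := by
    rintro x ⟨hx, hTx⟩
    have hconst : Tendsto (fun _ : ℕ => x) U (𝓝 (R x)) := by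
      have := (hRspec x hx).2
      have hfun : (fun n => Z n x) = fun _ : ℕ => x := by
        funext n; exact hZfix n x hx hTx
      rwa [hfun] at this
    exact (tendsto_nhds_unique hconst tendsto_const_nhds)
  obtain ⟨x0, hx0⟩ := hne
  refine ⟨⟨R x0, (hRspec x0 hx0).1, hTR x0 hx0⟩, R, ?_, hRne, hRfix⟩
  intro x hx
  exact ⟨(hRspec x hx).1, hTR x hx⟩
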